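/- arXiv:2001.09278 — 8 statements merged into one kernel-verified Lean document; each statement's English description precedes it below -/
import Mathlib

section
/- Let r and s be reflections of a finite-dimensional vector space M over a field K of characteristic 0, with direction vectors a and b forming a linearly independent family, so that r(b) = b + λa and s(a) = a + μb for some λ, μ in K. Then the product rs has order 2 if and only if λ = 0 and μ = 0. -/
/-- If `r` and `s` are reflections of a finite-dimensional vector space `M` over a field `K`
of characteristic 0, with direction vectors `a` and `b` forming a linearly independent family,
and `r b = b + λ • a`, `s a = a + μ • b`, then `r * s` has order 2 iff `λ = 0` and `μ = 0`. -/
theorem order_two_iff_coeffs_zero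
    (K M : Type*) [Field K] [CharZero K] [AddCommGroup M] [Module K M]
    [FiniteDimensional K M]
    (r s : Module.End K M) (a b : M) (lam mu : K)
    (hr2 : r * r = 1) (hs2 : s * s = 1)
    (hra : r a = -a) (hsb : s b = -b)
    (hrb : r b = b + lam • a) (hsa : s a = a + mu • b)
    (hrdir : ∀ x : M, r x - x ∈ Submodule.span K ({a} : Set M))
    (hsdir : ∀ x : M, s x - x ∈ Submodule.span K ({b} : Set M))
    (hab : LinearIndependent K ![a, b]) :
    orderOf (r * s) = 2 ↔ lam = 0 ∧ mu = 0 := by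
  have hpair := LinearIndependent.pair_iff.mp hab
  have ha0 : a ≠ 0 := by
    intro h
    exact one_ne_zero (hpair 1 0 (by simp [h])).1
  constructor
  · intro hord
    have h2 : (r * s) * (r * s) = 1 := by
      rw [← pow_two, ← hord]; exact pow_orderOf_eq_one _
    have h1 : (r * s) * (s * r) = 1 := by
      calc (r * s) * (s * r) = r * ((s * s) * r) := by rw [mul_assoc, mul_assoc]
        _ = 1 := by rw [hs2, one_mul, hr2]
    have hc : r * s = s * r := by
      calc r * s = (r * s) * ((r * s) * (s * r)) := by rw [h1, mul_one]
        _ = ((r * s) * (r * s)) * (s * r) := (mul_assoc _ _ _).symm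
        _ = s * r := by rw [h2, one_mul]
    have hca : (r * s) a = (s * r) a := by rw [hc]
    have hcb : (r * s) b = (s * r) b := by rw [hc]
    simp only [Module.End.mul_apply, hsa, hra, hsb, hrb, map_add, map_smul, map_neg] at hca hcb
    have hmu : (mu * lam) • a + (2 * mu) • b = 0 := by
      linear_combination (norm := module) hca
    obtain ⟨h1', h2'⟩ := hpair _ _ hmu
    have hmu0 : mu = 0 := by
      rcases mul_eq_zero.mp h2' with h | h
      · exact absurd h two_ne_zero
      · exact h
    have hlam : (2 * lam) • a + (lam * mu) • b = 0 := by
      linear_combination (norm := module) -hcb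
    obtain ⟨h3', h4'⟩ := hpair _ _ hlam
    have hlam0 : lam = 0 := by
      rcases mul_eq_zero.mp h3' with h | h
      · exact absurd h two_ne_zero
      · exact h
    exact ⟨hlam0, hmu0⟩
  · rintro ⟨hl, hm⟩
    subst hl; subst hm
    simp only [zero_smul, add_zero] at hrb hsa
    have h2 : (r * s) ^ 2 = 1 := by
      ext x
      obtain ⟨c, hcx⟩ := Submodule.mem_span_singleton.mp (hsdir x)
      obtain ⟨d, hdx⟩ := Submodule.mem_span_singleton.mp (hrdir x)
      have hsx : s x = x + c • b := by linear_combination (norm := module) -hcx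
      have hrx : r x = x + d • a := by linear_combination (norm := module) -hdx
      have key : (r * s) ((r * s) x) = x := by
        simp only [Module.End.mul_apply, hsx, map_add, map_smul, hrx, hrb, hsb, hsa, hra, map_neg]
        module
      simpa [pow_two, Module.End.mul_apply] using key
    have hne : r * s ≠ 1 := by
      intro h
      have ha : (r * s) a = a := by rw [h]; rfl
      rw [Module.End.mul_apply, hsa, hra] at ha
      have h2a : (2 : K) • a = 0 := by
        rw [two_smul]; linear_combination (norm := module) -ha
      exact ha0 ((smul_eq_zero_iff_right (two_ne_zero (α := K))).mp h2a)
    haveI : Fact (Nat.Prime 2) := ⟨Nat.prime_two⟩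
    exact orderOf_eq_prime h2 hne
end

section
/- Let M be a vector space of dimension m over a field K of characteristic 0, and let r, s be reflections of M with linearly independent direction vectors a, b. Then the characteristic polynomial of rs is (X-1)^{m-2} (X² - (C(r,s) - 2)X + 1), where C(r,s) is the Cartan coefficient of (r,s). In particular Tr(rs) = m - 4 + C(r,s). -/
open Polynomial

/-- The characteristic polynomial of the product of two reflections with linearly
independent direction vectors is `(X-1)^(m-2) * (X² - (C(r,s) - 2)X + 1)`, where
`C(r,s) = λμ` is the Cartan coefficient; in particular `Tr(rs) = m - 4 + C(r,s)`. -/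
theorem charpoly_of_product_of_reflections
    (K M : Type*) [Field K] [CharZero K] [AddCommGroup M] [Module K M]
    [FiniteDimensional K M] (m : ℕ) (hm : Module.finrank K M = m) (hm2 : 2 ≤ m)
    (r s : Module.End K M) (a b : M) (lam mu : K)
    (hr2 : r * r = 1) (hs2 : s * s = 1)
    (hra : r a = -a) (hsb : s b = -b)
    (hrb : r b = b + lam • a) (hsa : s a = a + mu • b)
    (hrdir : ∀ x : M, r x - x ∈ Submodule.span K ({a} : Set M))
    (hsdir : ∀ x : M, s x - x ∈ Submodule.span K ({b} : Set M))
    (hab : LinearIndependent K ![a, b]) :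
    (r * s).charpoly = (X - 1) ^ (m - 2) * (X ^ 2 - C (lam * mu - 2) * X + 1) ∧
      LinearMap.trace K M (r * s) = (m : K) - 4 + lam * mu := by
  classical
  set f := r * s with hf
  have hfa : f a = (lam * mu - 1) • a + mu • b := by
    show r (s a) = _
    rw [hsa, map_add, map_smul, hra, hrb]
    module
  have hfb : f b = (-lam) • a + (-1 : K) • b := by
    show r (s b) = _
    rw [hsb, map_neg, hrb]
    module
  set v : Fin 2 → M := ![a, b] with hv
  set W : Submodule K M := Submodule.span K (Set.range v) with hW
  obtain ⟨W', hW'⟩ := Submodule.exists_isCompl W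
  set k := Module.finrank K W' with hk
  let bW : Module.Basis (Fin 2) K W := Module.Basis.span hab
  let bW' := Module.finBasis K W'
  let e : Module.Basis (Fin 2 ⊕ Fin k) K M :=
    (bW.prod bW').map (Submodule.prodEquivOfIsCompl W W' hW')
  have he : ∀ j : Fin 2, e (Sum.inl j) = v j := by
    intro j
    simp only [e, Module.Basis.map_apply, Module.Basis.prod_apply, Sum.elim_inl]
    rw [Submodule.coe_prodEquivOfIsCompl']
    simp only [Function.comp_apply, LinearMap.inl_apply]
    rw [ZeroMemClass.coe_zero, add_zero]; exact congrArg Subtype.val (Module.Basis.span_apply hab j)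
  have hkm : k = m - 2 := by
    have h2 : Module.finrank K W = 2 := by
      rw [hW, finrank_span_eq_card hab]; simp
    have := Submodule.finrank_add_eq_of_isCompl hW'
    omega
  have haW : a ∈ W := Submodule.subset_span ⟨0, by simp [hv]⟩
  have hbW : b ∈ W := Submodule.subset_span ⟨1, by simp [hv]⟩
  -- f moves vectors only within W
  have hmove : ∀ x : M, f x - x ∈ W := by
    intro x
    have h1 : r (s x) - s x ∈ W := by
      refine Submodule.span_le.2 ?_ (hrdir (s x))
      simpa using haW
    have h2 : s x - x ∈ W := by
      refine Submodule.span_le.2 ?_ (hsdir x)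
      simpa using hbW
    have : f x - x = (r (s x) - s x) + (s x - x) := by
      show r (s x) - x = _; abel
    rw [this]; exact W.add_mem h1 h2
  -- repr of elements of W vanishes at inr coordinates
  have hWrepr : ∀ w ∈ W, ∀ c : Fin k, e.repr w (Sum.inr c) = 0 := by
    intro w hw c
    induction hw using Submodule.span_induction with
    | mem x hx =>
      obtain ⟨j, rfl⟩ := hx
      rw [← he j, Module.Basis.repr_self]
      simp [Finsupp.single_apply]
    | zero => simp
    | add x y _ _ hx hy => simp [map_add, hx, hy]
    | smul c x _ hx => simp [map_smul, hx]
  set A : Matrix (Fin 2) (Fin 2) K := !![lam * mu - 1, -lam; mu, -1] with hA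
  set B : Matrix (Fin 2) (Fin k) K :=
    fun i j => e.repr (f (e (Sum.inr j))) (Sum.inl i) with hB
  have hM : LinearMap.toMatrix e e f = Matrix.fromBlocks A B 0 1 := by
    ext i j
    rw [LinearMap.toMatrix_apply]
    rcases i with i | i <;> rcases j with j | j
    · -- A block
      rw [Matrix.fromBlocks_apply₁₁]
      have h0 : e (Sum.inl (0 : Fin 2)) = a := by rw [he]; simp [hv]
      fin_cases j
      · show e.repr (f (e (Sum.inl 0))) (Sum.inl i) = A i 0
        rw [h0, hfa]
        have h0' : a = e (Sum.inl 0) := h0.symm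
        have h1 : b = e (Sum.inl 1) := by rw [he]; simp [hv]
        rw [h0', h1, map_add, map_smul, map_smul, Module.Basis.repr_self, Module.Basis.repr_self]
        fin_cases i <;> simp [hA, Finsupp.single_apply]
      · show e.repr (f (e (Sum.inl 1))) (Sum.inl i) = A i 1
        have h1' : e (Sum.inl (1 : Fin 2)) = b := by rw [he]; simp [hv]
        rw [h1', hfb]
        have h0' : a = e (Sum.inl 0) := h0.symm
        have h1 : b = e (Sum.inl 1) := h1'.symm
        rw [h0', h1, map_add, map_smul, map_smul, Module.Basis.repr_self, Module.Basis.repr_self]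
        fin_cases i <;> simp [hA, Finsupp.single_apply]
    · rfl
    · -- zero block
      rw [Matrix.fromBlocks_apply₂₁]
      have hfW : f (e (Sum.inl j)) ∈ W := by
        have h1 := hmove (e (Sum.inl j))
        have h2 : e (Sum.inl j) ∈ W := by
          rw [he]; exact Submodule.subset_span ⟨j, rfl⟩
        have : f (e (Sum.inl j)) = (f (e (Sum.inl j)) - e (Sum.inl j)) + e (Sum.inl j) := by abel
        rw [this]; exact W.add_mem h1 h2
      simp [hWrepr _ hfW i]
    · -- identity block
      rw [Matrix.fromBlocks_apply₂₂]
      have h1 := hmove (e (Sum.inr j))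
      have : f (e (Sum.inr j)) = (f (e (Sum.inr j)) - e (Sum.inr j)) + e (Sum.inr j) := by abel
      rw [this, map_add, Finsupp.add_apply, hWrepr _ h1 i, Module.Basis.repr_self, zero_add,
        Matrix.one_apply]
      simp [Finsupp.single_apply, eq_comm]
  -- charpoly of A
  have hAchar : A.charpoly = X ^ 2 - C (lam * mu - 2) * X + 1 := by
    rw [hA, Matrix.charpoly, Matrix.det_fin_two,
      Matrix.charmatrix_apply_eq, Matrix.charmatrix_apply_eq,
      Matrix.charmatrix_apply_ne _ _ _ (by decide : (0:Fin 2) ≠ 1),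
      Matrix.charmatrix_apply_ne _ _ _ (by decide : (1:Fin 2) ≠ 0)]
    norm_num
    simp only [map_sub, map_mul, map_neg, map_one, map_ofNat]
    ring
  -- charpoly of 1
  have h1char : (1 : Matrix (Fin k) (Fin k) K).charpoly = (X - 1) ^ k := by
    rw [Matrix.charpoly_of_upperTriangular _ Matrix.blockTriangular_one]
    simp [Finset.prod_const, Finset.card_univ]
  have hchar : f.charpoly = (X - 1) ^ (m - 2) * (X ^ 2 - C (lam * mu - 2) * X + 1) := by
    rw [← LinearMap.charpoly_toMatrix f e, hM, Matrix.charpoly_fromBlocks_zero₂₁, hAchar,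
      h1char, hkm, mul_comm]
  refine ⟨hchar, ?_⟩
  -- trace
  rw [LinearMap.trace_eq_matrix_trace K e f, hM]
  rw [Matrix.trace]
  rw [Fintype.sum_sum_type]
  simp only [Matrix.diag_apply, Matrix.fromBlocks_apply₁₁, Matrix.fromBlocks_apply₂₂,
    Matrix.one_apply_eq, Fin.sum_univ_two]
  have hcast : ((k : ℕ) : K) = (m : K) - 2 := by
    rw [hkm, Nat.cast_sub hm2]; norm_num
  simp only [Finset.sum_const, Finset.card_univ, Fintype.card_fin, nsmul_eq_mul, mul_one]
  rw [hcast]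
  simp [hA]
  ring
end

section
/- Let r and s be distinct reflections of a finite-dimensional vector space M over a field K of characteristic 0, whose direction vectors span the same line. Then rs is unipotent and not the identity. -/
/-- If `r` and `s` are distinct reflections whose direction vectors span the same line,
then `rs` is unipotent and not the identity. -/
theorem unipotent_of_same_direction_line
    (K M : Type*) [Field K] [CharZero K] [AddCommGroup M] [Module K M]
    [FiniteDimensional K M]
    (r s : Module.End K M) (a b : M)
    (hr2 : r * r = 1) (hs2 : s * s = 1)
    (ha : a ≠ 0) (hb : b ≠ 0)
    (hra : r a = -a) (hsb : s b = -b)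
    (hrdir : ∀ x : M, r x - x ∈ Submodule.span K ({a} : Set M))
    (hsdir : ∀ x : M, s x - x ∈ Submodule.span K ({b} : Set M))
    (hline : Submodule.span K ({a} : Set M) = Submodule.span K ({b} : Set M))
    (hrs : r ≠ s) :
    IsNilpotent (r * s - 1) ∧ r * s ≠ 1 := by
  have hb_mem : b ∈ Submodule.span K ({a} : Set M) := by
    rw [hline]; exact Submodule.mem_span_singleton_self b
  obtain ⟨c, hc⟩ := Submodule.mem_span_singleton.mp hb_mem
  have hc0 : c ≠ 0 := by
    rintro rfl
    rw [zero_smul] at hc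
    exact hb hc.symm
  have hsa : s a = -a := by
    have h1 : s (c • a) = -(c • a) := by rw [hc]; exact hsb
    rw [map_smul, ← smul_neg] at h1
    exact smul_right_injective M hc0 h1
  have hza : (r * s - 1) a = 0 := by
    have : (r * s - 1) a = r (s a) - a := by
      simp [LinearMap.sub_apply, Module.End.mul_apply]
    rw [this, hsa, map_neg, hra, neg_neg, sub_self]
  have hmem : ∀ x, (r * s - 1) x ∈ Submodule.span K ({a} : Set M) := by
    intro x
    have h1 := hrdir (s x)
    have h2 : s x - x ∈ Submodule.span K ({a} : Set M) := by
      rw [hline]; exact hsdir x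
    have heq : (r * s - 1) x = (r (s x) - s x) + (s x - x) := by
      simp [LinearMap.sub_apply, Module.End.mul_apply]
    rw [heq]
    exact Submodule.add_mem _ h1 h2
  constructor
  · refine ⟨2, ?_⟩
    ext x
    obtain ⟨t, ht⟩ := Submodule.mem_span_singleton.mp (hmem x)
    have : (r * s - 1) ((r * s - 1) x) = 0 := by
      rw [← ht, map_smul, hza, smul_zero]
    simpa [pow_two, Module.End.mul_apply] using this
  · intro h
    apply hrs
    calc r = r * (s * s) := by rw [hs2, mul_one]
    _ = (r * s) * s := by rw [mul_assoc]
    _ = s := by rw [h, one_mul]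
end

section
/- Let G be a subgroup of GL(M) generated by a set S of reflections with |S| = dim M = n, such that all products st (s,t ∈ S) have finite order, the Coxeter graph Γ(G) is connected, and the direction vectors (a_s)_{s∈S} form a basis of M. Then every element of the centralizer C_{GL(M)}(G) is a scalar map. -/
private lemma walk_const {V : Type*} {K : Type*} {G : SimpleGraph V} {k : V → K}
    (h : ∀ i j, G.Adj i j → k i = k j) {u v : V} (w : G.Walk u v) : k u = k v := by
  induction w with
  | nil => rfl
  | cons h' _ ih => exact (h _ _ h').trans ih

/-- Let `G ≤ GL(M)` be generated by reflections `s i` with direction vectors forming a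
basis, all products of finite order, and connected Coxeter graph. Then every element of
the centralizer of `G` in `GL(M)` is a scalar map. -/
theorem centralizer_is_scalar
    (K M : Type*) [Field K] [CharZero K] [AddCommGroup M] [Module K M]
    (ι : Type*) [Fintype ι] (a : Module.Basis ι K M)
    (s : ι → (M ≃ₗ[K] M)) (c : ι → ι → K)
    -- each `s i` is a reflection with direction vector `a i`
    (hs2 : ∀ i, s i * s i = 1) (hs1 : ∀ i, s i ≠ 1)
    (hsa : ∀ i, s i (a i) = -(a i))
    (hdir : ∀ i, ∀ x : M, s i x - x ∈ Submodule.span K ({a i} : Set M))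
    -- the coefficients of the action on the basis
    (hact : ∀ i j, i ≠ j → s i (a j) = a j + c i j • a i)
    -- for noncommuting pairs both coefficients are nonzero; for commuting distinct
    -- pairs both vanish
    (hedge : ∀ i j, i ≠ j → (Commute (s i) (s j) ↔ c i j = 0 ∧ c j i = 0))
    -- all products have finite order
    (hfin : ∀ i j, IsOfFinOrder (s i * s j))
    -- the Coxeter graph is connected
    (hconn : (SimpleGraph.fromRel fun i j => c i j ≠ 0 ∧ c j i ≠ 0).Connected)
    -- `z` centralizes `G`
    (z : M ≃ₗ[K] M)
    (hz : ∀ g ∈ Subgroup.closure (Set.range s), Commute z g) :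
    ∃ k : K, ∀ m : M, z m = k • m := by
  -- z commutes with each s i pointwise
  have hcomm : ∀ i, ∀ x : M, z (s i x) = s i (z x) := by
    intro i x
    have h := hz (s i) (Subgroup.subset_closure ⟨i, rfl⟩)
    have := congrArg (fun f : M ≃ₗ[K] M => f x) h.eq
    simpa using this
  -- z (a i) is a multiple of a i
  have hmul : ∀ i, ∃ k : K, z (a i) = k • a i := by
    intro i
    have h1 : s i (z (a i)) = -(z (a i)) := by
      rw [← hcomm, hsa, map_neg]
    have h2 : s i (z (a i)) - z (a i) ∈ Submodule.span K ({a i} : Set M) := hdir i _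
    rw [h1] at h2
    have h3 : (-2 : K) • z (a i) ∈ Submodule.span K ({a i} : Set M) := by
      have he : -(z (a i)) - z (a i) = (-2 : K) • z (a i) := by
        rw [neg_smul, two_smul]; abel
      rwa [he] at h2
    have h4 : z (a i) ∈ Submodule.span K ({a i} : Set M) := by
      have := Submodule.smul_mem (Submodule.span K ({a i} : Set M)) (-2 : K)⁻¹ h3
      rwa [smul_smul, inv_mul_cancel₀ (by norm_num), one_smul] at this
    exact (Submodule.mem_span_singleton.mp h4).imp fun t ht => ht.symm
  choose k hk using hmul
  -- k is constant on edges
  have hkedge : ∀ i j, (SimpleGraph.fromRel fun i j => c i j ≠ 0 ∧ c j i ≠ 0).Adj i j →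
      k i = k j := by
    intro i j hadj
    obtain ⟨hne, hrel⟩ := hadj
    have hcij : c i j ≠ 0 := by rcases hrel with ⟨h, _⟩ | ⟨_, h⟩ <;> exact h
    have h1 : z (s i (a j)) = s i (z (a j)) := hcomm i _
    rw [hact i j hne, map_add, map_smul, hk i, hk j, map_smul, hact i j hne,
      smul_add, smul_smul, smul_smul] at h1
    have h2 : (c i j * k i) • a i = (k j * c i j) • a i := add_left_cancel h1
    have h4 : c i j * k i = k j * c i j :=
      smul_left_injective K (a.ne_zero i) h2
    rw [mul_comm (k j) (c i j)] at h4
    exact mul_left_cancel₀ hcij h4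
  -- k is globally constant via connectedness
  obtain ⟨i0⟩ := hconn.nonempty
  refine ⟨k i0, ?_⟩
  have hall : ∀ i, k i = k i0 := fun i => (hconn.preconnected i i0).elim
    fun w => walk_const hkedge w
  have hbasis : ∀ i, z (a i) = k i0 • a i := fun i => by rw [hk i, hall i]
  have : z.toLinearMap = (k i0) • (LinearMap.id : M →ₗ[K] M) := by
    apply a.ext
    intro i
    simpa using hbasis i
  intro m
  have := congrFun (congrArg (fun f : M →ₗ[K] M => (f : M → M)) this) m
  simpa using this
end

section
/- Let G ≤ GL(M) be a reflection group as above (|S| = dim M, all m_{st} finite, Γ(G) connected, direction vectors a basis). If the space of G-fixed vectors C_M(G) is nonzero, then the center Z(G) is trivial. -/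
/-- In the setting of a reflection group with connected graph and direction vectors forming
a basis: if the space of `G`-fixed vectors is nonzero, then the center of `G` is trivial. -/
theorem center_trivial_of_fixed_vector
    (K M : Type*) [Field K] [CharZero K] [AddCommGroup M] [Module K M]
    (ι : Type*) [Fintype ι] (a : Module.Basis ι K M)
    (s : ι → (M ≃ₗ[K] M)) (c : ι → ι → K)
    (hs2 : ∀ i, s i * s i = 1) (hs1 : ∀ i, s i ≠ 1)
    (hsa : ∀ i, s i (a i) = -(a i))
    (hdir : ∀ i, ∀ x : M, s i x - x ∈ Submodule.span K ({a i} : Set M))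
    (hact : ∀ i j, i ≠ j → s i (a j) = a j + c i j • a i)
    (hedge : ∀ i j, i ≠ j → (Commute (s i) (s j) ↔ c i j = 0 ∧ c j i = 0))
    (hfin : ∀ i j, IsOfFinOrder (s i * s j))
    (hconn : (SimpleGraph.fromRel fun i j => c i j ≠ 0 ∧ c j i ≠ 0).Connected)
    -- there is a nonzero `G`-fixed vector
    (hfix : ∃ m : M, m ≠ 0 ∧ ∀ g ∈ Subgroup.closure (Set.range s), g m = m) :
    ∀ z ∈ Subgroup.closure (Set.range s),
      (∀ g ∈ Subgroup.closure (Set.range s), Commute z g) → z = 1 := by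
  intro z hz hcomm
  obtain ⟨m, hm0, hmfix⟩ := hfix
  have hzs : ∀ i, ∀ x : M, z (s i x) = s i (z x) := by
    intro i x
    have h := (hcomm (s i) (Subgroup.subset_closure ⟨i, rfl⟩)).eq
    exact congrArg (fun f : M ≃ₗ[K] M => f x) h
  -- each z (a i) is a scalar multiple of a i
  have heig : ∀ i, ∃ k : K, z (a i) = k • a i := by
    intro i
    have h1 : s i (z (a i)) = - z (a i) := by
      rw [← hzs i (a i), hsa i, map_neg]
    have h2 := hdir i (z (a i))
    rw [h1] at h2
    have h3 : (-(2:K)) • z (a i) ∈ Submodule.span K ({a i} : Set M) := by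
      have : (-(2:K)) • z (a i) = - z (a i) - z (a i) := by
        rw [neg_smul, two_smul]; abel
      rwa [this]
    have h4 : z (a i) ∈ Submodule.span K ({a i} : Set M) := by
      have h5 := Submodule.smul_mem _ (-(2:K))⁻¹ h3
      rwa [smul_smul, inv_mul_cancel₀ (by norm_num), one_smul] at h5
    obtain ⟨k, hk⟩ := Submodule.mem_span_singleton.mp h4
    exact ⟨k, hk.symm⟩
  choose lam hlam using heig
  have hane : ∀ i, a i ≠ 0 := fun i => a.ne_zero i
  -- along an edge, eigenvalues agree
  have hedgeEq : ∀ i j, i ≠ j → c i j ≠ 0 → lam i = lam j := by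
    intro i j hne hc
    have h := hzs i (a j)
    rw [hact i j hne, map_add, map_smul, hlam i, hlam j, map_smul, hact i j hne,
      smul_add] at h
    -- h : lam j • a j + c i j • lam i • a i = lam j • a j + lam j • (c i j • a i)
    have h2 : (c i j * lam i) • a i = (lam j * c i j) • a i := by
      have := add_left_cancel h
      rwa [smul_smul, smul_smul] at this
    have h3 : (c i j * lam i - lam j * c i j) • a i = 0 := by
      rw [sub_smul, h2, sub_self]
    rcases smul_eq_zero.mp h3 with h4 | h4
    · have h5 : c i j * (lam i - lam j) = 0 := by linear_combination h4
      rcases mul_eq_zero.mp h5 with h6 | h6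
      · exact absurd h6 hc
      · exact sub_eq_zero.mp h6
    · exact absurd h4 (hane i)
  -- eigenvalues are constant by connectedness
  have hconst : ∀ i j, lam i = lam j := by
    intro i j
    obtain ⟨w⟩ := hconn i j
    induction w with
    | nil => rfl
    | cons h w ih =>
      rename_i u v p
      rw [SimpleGraph.fromRel_adj] at h
      obtain ⟨hne, hcc⟩ := h
      have : lam u = lam v := by
        rcases hcc with ⟨h1, h2⟩ | ⟨h1, h2⟩
        · exact hedgeEq u v hne h1
        · exact (hedgeEq v u hne.symm h1).symm
      rw [this, ih]
  -- ι is nonempty, else m = 0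
  have hne : Nonempty ι := by
    by_contra h
    rw [not_nonempty_iff] at h
    have : a.repr m = 0 := Subsingleton.elim _ _
    exact hm0 (by simpa using congrArg a.repr.symm this)
  obtain ⟨i0⟩ := hne
  -- z m = lam i0 • m
  have hzm : z m = lam i0 • m := by
    conv_lhs => rw [← a.sum_repr m]
    conv_rhs => rw [← a.sum_repr m]
    rw [map_sum, Finset.smul_sum]
    refine Finset.sum_congr rfl fun i _ => ?_
    rw [map_smul, hlam i, hconst i i0, smul_smul, smul_smul, mul_comm]
  rw [hmfix z hz] at hzm
  have hl1 : lam i0 = 1 := by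
    by_contra hL
    have : (lam i0 - 1) • m = 0 := by rw [sub_smul, ← hzm, one_smul, sub_self]
    rcases smul_eq_zero.mp this with h | h
    · exact hL (sub_eq_zero.mp h)
    · exact hm0 h
  -- conclude z = 1
  have hz1 : (z : M →ₗ[K] M) = LinearMap.id := by
    refine Module.Basis.ext a fun i => ?_
    simp [hlam i, hconst i i0, hl1]
  refine LinearEquiv.toLinearMap_injective ?_
  simpa using hz1
end

section
/- Let φ be a nonzero G-invariant θ-sesquilinear form on M (θ an automorphism of K), and let (s,t) be an edge of the spanning tree T with s ⪯ t, so that s(a_t) = α a_s + a_t and t(a_s) = a_s + a_t with α ≠ 0. Writing β_{st} = φ(a_s, a_t), β_s = φ(a_s,a_s), β_t = φ(a_t,a_t): if β_{st} ≠ 0 then β_t = -2β_{st}, φ(a_t,a_s) = β_{st}, θ(α)β_s = -2β_{st}, and θ(α) = α. -/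
/-- Let `φ` be a nonzero `G`-invariant `θ`-sesquilinear form and `(s,t)` a tree edge with
`s ⪯ t`, so that `s(a_t) = α a_s + a_t` and `t(a_s) = a_s + a_t` with `α ≠ 0`. If
`β_{st} = φ(a_s,a_t) ≠ 0` then `β_t = -2β_{st}`, `φ(a_t,a_s) = β_{st}`,
`θ(α)β_s = -2β_{st}` and `θ(α) = α`. -/
theorem sesquilinear_invariant_tree_edge
    (K V : Type*) [Field K] [CharZero K] [AddCommGroup V] [Module K V]
    (θ : K ≃+* K)
    (φ : V → V → K)
    (hadd₁ : ∀ x x' y : V, φ (x + x') y = φ x y + φ x' y)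
    (hadd₂ : ∀ x y y' : V, φ x (y + y') = φ x y + φ x y')
    (hsmul₁ : ∀ (c : K) (x y : V), φ (c • x) y = c * φ x y)
    (hsmul₂ : ∀ (c : K) (x y : V), φ x (c • y) = θ c * φ x y)
    (s t : Module.End K V) (as at' : V) (α : K) (hα : α ≠ 0)
    (hs2 : s * s = 1) (ht2 : t * t = 1)
    (hsas : s as = -as) (hsat : s at' = α • as + at')
    (htat : t at' = -at') (htas : t as = as + at')
    (hinvs : ∀ x y : V, φ (s x) (s y) = φ x y)
    (hinvt : ∀ x y : V, φ (t x) (t y) = φ x y)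
    (hβ : φ as at' ≠ 0) :
    φ at' at' = -2 * φ as at' ∧
    φ at' as = φ as at' ∧
    θ α * φ as as = -2 * φ as at' ∧
    θ α = α := by
  have hneg₁ : ∀ x y : V, φ (-x) y = -φ x y := by
    intro x y
    have := hsmul₁ (-1) x y
    simpa [neg_one_smul] using this
  have hneg₂ : ∀ x y : V, φ x (-y) = -φ x y := by
    intro x y
    have := hsmul₂ (-1) x y
    simpa [neg_one_smul] using this
  have h1 := hinvt as at'
  rw [htat, htas, hadd₁, hneg₂, hneg₂] at h1
  have hbt : φ at' at' = -2 * φ as at' := by linear_combination -h1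
  have h2 := hinvt as as
  rw [htas, hadd₁, hadd₂, hadd₂] at h2
  have hba : φ at' as = φ as at' := by linear_combination h2 - hbt
  have h3 := hinvs as at'
  rw [hsas, hsat, hneg₁, hadd₂, hsmul₂] at h3
  have hbs : θ α * φ as as = -2 * φ as at' := by linear_combination -h3
  have h4 := hinvs at' at'
  rw [hsat] at h4
  simp only [hadd₁, hadd₂, hsmul₁, hsmul₂] at h4
  have key : α * φ as at' = θ α * φ as at' := by
    linear_combination α * hbs + θ α * hba - h4
  have hθ : θ α = α := by
    have := mul_right_cancel₀ hβ key
    exact this.symm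
  exact ⟨hbt, hba, hbs, hθ⟩
end

section
/- Under the hypotheses of the fundamental construction, the space Φ of G-invariant θ-sesquilinear forms on M has dimension at most 1. -/
open Real

noncomputable def geomC {B : Type*} (Mat : CoxeterMatrix B) (k l : B) : ℝ :=
  -Real.cos (Real.pi / (Mat.M k l : ℝ))

lemma geomC_symm {B : Type*} (Mat : CoxeterMatrix B) (k l : B) :
    geomC Mat k l = geomC Mat l k := by
  rw [geomC, geomC, Mat.symmetric k l]

lemma geomC_self {B : Type*} (Mat : CoxeterMatrix B) (k : B) : geomC Mat k k = 1 := by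
  simp [geomC, Mat.diagonal k]

noncomputable def geomPhi {B : Type*} [Fintype B] (Mat : CoxeterMatrix B) (k : B) :
    (B → ℝ) →ₗ[ℝ] ℝ where
  toFun x := ∑ l, x l * geomC Mat l k
  map_add' x y := by
    simp [add_mul, Finset.sum_add_distrib]
  map_smul' r x := by
    simp [Finset.mul_sum, mul_assoc]

lemma geomPhi_single {B : Type*} [Fintype B] [DecidableEq B] (Mat : CoxeterMatrix B) (k l : B) :
    geomPhi Mat k (Pi.single l 1) = geomC Mat l k := by
  simp only [geomPhi, LinearMap.coe_mk, AddHom.coe_mk]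
  rw [Finset.sum_eq_single l]
  · simp
  · intro b _ hb; simp [Pi.single_apply, hb]
  · simp

noncomputable def geomSig {B : Type*} [Fintype B] [DecidableEq B] (Mat : CoxeterMatrix B)
    (k : B) : Module.End ℝ (B → ℝ) :=
  LinearMap.id - (2 : ℝ) • (geomPhi Mat k).smulRight (Pi.single k 1)

lemma geomSig_apply {B : Type*} [Fintype B] [DecidableEq B] (Mat : CoxeterMatrix B)
    (k : B) (x : B → ℝ) :
    geomSig Mat k x = x - (2 * geomPhi Mat k x) • (Pi.single k 1 : B → ℝ) := by
  simp [geomSig, smul_smul]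

lemma geomSig_invol {B : Type*} [Fintype B] [DecidableEq B] (Mat : CoxeterMatrix B)
    (k : B) (x : B → ℝ) : geomSig Mat k (geomSig Mat k x) = x := by
  rw [geomSig_apply, geomSig_apply]
  rw [map_sub, map_smul, geomPhi_single, geomC_self, smul_eq_mul, mul_one]
  module

section Pair

variable {B : Type*} [Fintype B] [DecidableEq B] (Mat : CoxeterMatrix B) (k l : B)

/-- Action of `σₖ σₗ` on the invariant plane. -/
lemma geomL1 (hkl : k ≠ l) (p q : ℝ) :
    (geomSig Mat k * geomSig Mat l) (p • (Pi.single k 1 : B → ℝ) + q • (Pi.single l 1 : B → ℝ)) =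
      ((4 * geomC Mat k l ^ 2 - 1) * p + 2 * geomC Mat k l * q) • (Pi.single k 1 : B → ℝ) +
        (-(2 * geomC Mat k l) * p - q) • (Pi.single l 1 : B → ℝ) := by
  simp only [Module.End.mul_apply, geomSig_apply, map_add, map_sub, map_smul,
    geomPhi_single, geomC_self, smul_eq_mul]
  rw [geomC_symm Mat l k]
  match_scalars <;> ring

lemma geomCH (hkl : k ≠ l) (p q : ℝ) :
    (geomSig Mat k * geomSig Mat l)
        ((geomSig Mat k * geomSig Mat l) (p • (Pi.single k 1 : B → ℝ) + q • (Pi.single l 1 : B → ℝ))) =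
      (4 * geomC Mat k l ^ 2 - 2) •
          ((geomSig Mat k * geomSig Mat l) (p • (Pi.single k 1 : B → ℝ) + q • (Pi.single l 1 : B → ℝ))) -
        (p • (Pi.single k 1 : B → ℝ) + q • (Pi.single l 1 : B → ℝ)) := by
  rw [geomL1 Mat k l hkl, geomL1 Mat k l hkl]
  match_scalars <;> ring

end Pair

section Pow

variable {B : Type*} [Fintype B] [DecidableEq B] (Mat : CoxeterMatrix B) (k l : B)

lemma geomPow_plane (hkl : k ≠ l) (m : ℕ) (hm : 3 ≤ m) (hMkl : Mat.M k l = m) (p q : ℝ) :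
    ((geomSig Mat k * geomSig Mat l) ^ m)
        (p • (Pi.single k 1 : B → ℝ) + q • (Pi.single l 1 : B → ℝ)) =
      p • (Pi.single k 1 : B → ℝ) + q • (Pi.single l 1 : B → ℝ) := by
  set P := geomSig Mat k * geomSig Mat l with hP
  set θ : ℝ := Real.pi / m with hθ
  have hmR : (3:ℝ) ≤ (m:ℝ) := by exact_mod_cast hm
  have hmpos : (0:ℝ) < (m:ℝ) := by linarith
  have hθpos : 0 < θ := div_pos Real.pi_pos hmpos
  have h2θ : 2 * θ < Real.pi := by
    rw [hθ, show 2 * (Real.pi / (m:ℝ)) = 2 * Real.pi / (m:ℝ) from by ring, div_lt_iff₀ hmpos]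
    nlinarith [Real.pi_pos]
  have hS : Real.sin (2 * θ) ≠ 0 :=
    ne_of_gt (Real.sin_pos_of_pos_of_lt_pi (by linarith) h2θ)
  set u : ℕ → ℝ := fun n => Real.sin (2 * n * θ) / Real.sin (2 * θ) with hu
  have hu0 : u 0 = 0 := by simp [hu]
  have hu1 : u 1 = 1 := by
    simp only [hu, Nat.cast_one, mul_one]
    rw [div_self hS]
  have hγ : geomC Mat k l = -Real.cos θ := by rw [geomC, hMkl, hθ]
  have ht : 4 * geomC Mat k l ^ 2 - 2 = 2 * Real.cos (2 * θ) := by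
    rw [hγ, Real.cos_two_mul]; ring
  have hrec : ∀ n : ℕ, u (n + 2) = (4 * geomC Mat k l ^ 2 - 2) * u (n + 1) - u n := by
    intro n
    rw [ht]
    simp only [hu]
    have e1 : 2 * ((n:ℝ) + 2) * θ = (2 * ((n:ℝ) + 1) * θ) + 2 * θ := by ring
    have e2 : 2 * (n:ℝ) * θ = (2 * ((n:ℝ) + 1) * θ) - 2 * θ := by ring
    push_cast
    rw [e1, e2, Real.sin_add, Real.sin_sub]
    field_simp
    ring
  have T : ∀ n : ℕ, ∀ p q : ℝ,
      (P ^ (n + 1)) (p • (Pi.single k 1 : B → ℝ) + q • (Pi.single l 1 : B → ℝ)) =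
        u (n + 1) • (P (p • (Pi.single k 1 : B → ℝ) + q • (Pi.single l 1 : B → ℝ))) -
          u n • (p • (Pi.single k 1 : B → ℝ) + q • (Pi.single l 1 : B → ℝ)) := by
    intro n
    induction n with
    | zero => intro p q; rw [hu1, hu0]; simp
    | succ n ih =>
      intro p q
      rw [pow_succ']
      rw [Module.End.mul_apply, ih p q, map_sub, map_smul, map_smul]
      rw [hP, geomCH Mat k l hkl p q, ← hP]
      rw [hrec n]
      module
  obtain ⟨n, rfl⟩ : ∃ n, m = n + 1 := ⟨m - 1, by omega⟩
  rw [T n p q]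
  have hne : ((n:ℝ) + 1) ≠ 0 := by positivity
  have hfin1 : u (n + 1) = 0 := by
    have e : 2 * (((n + 1) : ℕ):ℝ) * θ = 2 * Real.pi := by
      rw [hθ]; push_cast; field_simp
    simp only [hu]
    rw [e, Real.sin_two_pi, zero_div]
  have hfin2 : u n = -1 := by
    have e : 2 * ((n : ℕ):ℝ) * θ = 2 * Real.pi - 2 * θ := by
      rw [hθ]; push_cast; field_simp; ring
    simp only [hu]
    rw [e, Real.sin_sub, Real.sin_two_pi, Real.cos_two_pi]
    rw [zero_mul, one_mul, zero_sub, neg_div, div_self hS]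
  rw [hfin1, hfin2]
  module

end Pow

lemma geomLiftable {B : Type*} [Fintype B] [DecidableEq B] (Mat : CoxeterMatrix B)
    (hsph : ∀ i j, Mat.M i j ≠ 0) (k l : B) :
    (geomSig Mat k * geomSig Mat l) ^ Mat.M k l = 1 := by
  rcases eq_or_ne k l with rfl | hkl
  · rw [Mat.diagonal, pow_one]
    refine LinearMap.ext fun x => ?_
    rw [Module.End.mul_apply, Module.End.one_apply]
    exact geomSig_invol Mat k x
  · have hm0 : Mat.M k l ≠ 0 := hsph k l
    have hm1 : Mat.M k l ≠ 1 := Mat.off_diagonal k l hkl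
    have hm2 : 2 ≤ Mat.M k l := by omega
    set m := Mat.M k l with hMkl
    set γ := geomC Mat k l with hγ
    -- action on the plane
    have hplane : ∀ p q : ℝ, ((geomSig Mat k * geomSig Mat l) ^ m)
        (p • (Pi.single k 1 : B → ℝ) + q • (Pi.single l 1 : B → ℝ)) =
        p • (Pi.single k 1 : B → ℝ) + q • (Pi.single l 1 : B → ℝ) := by
      rcases eq_or_lt_of_le hm2 with h2 | h3
      · intro p q
        have hγ0 : γ = 0 := by
          rw [hγ, geomC, ← hMkl, ← h2]
          norm_num [Real.cos_pi_div_two]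
        rw [← h2, sq, Module.End.mul_apply, geomL1 Mat k l hkl, geomL1 Mat k l hkl, ← hγ, hγ0]
        match_scalars <;> ring
      · exact geomPow_plane Mat k l hkl m h3 rfl
    -- bound on γ
    have hθpos : 0 < Real.pi / (m:ℝ) := by
      apply div_pos Real.pi_pos
      exact_mod_cast by omega
    have hθle : Real.pi / (m:ℝ) ≤ Real.pi / 2 := by
      apply div_le_div_of_nonneg_left Real.pi_pos.le (by norm_num)
      exact_mod_cast hm2
    have hcos1 : Real.cos (Real.pi / (m:ℝ)) < 1 := by
      have := Real.strictAntiOn_cos (Set.mem_Icc.mpr ⟨le_refl 0, Real.pi_pos.le⟩)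
        (Set.mem_Icc.mpr ⟨hθpos.le, by linarith [Real.pi_pos]⟩) hθpos
      simpa using this
    have hcos0 : 0 ≤ Real.cos (Real.pi / (m:ℝ)) :=
      Real.cos_nonneg_of_mem_Icc (Set.mem_Icc.mpr ⟨by linarith, hθle⟩)
    have hδ : 1 - γ ^ 2 ≠ 0 := by
      have : γ = -Real.cos (Real.pi / (m:ℝ)) := by rw [hγ, geomC, hMkl]
      rw [this]; nlinarith
    -- fixed part
    have hfix : ∀ w : B → ℝ, geomPhi Mat k w = 0 → geomPhi Mat l w = 0 →
        ∀ n : ℕ, ((geomSig Mat k * geomSig Mat l) ^ n) w = w := by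
      intro w h1 h2 n
      have hP : (geomSig Mat k * geomSig Mat l) w = w := by
        rw [Module.End.mul_apply, geomSig_apply Mat l, h2, mul_zero, zero_smul, sub_zero,
          geomSig_apply, h1, mul_zero, zero_smul, sub_zero]
      induction n with
      | zero => simp
      | succ n ih => rw [pow_succ, Module.End.mul_apply, hP, ih]
    -- decomposition
    refine LinearMap.ext fun x => ?_
    set Fk := geomPhi Mat k x with hFk
    set Fl := geomPhi Mat l x with hFl
    set aa := (Fk - γ * Fl) / (1 - γ ^ 2) with haa
    set bb := (Fl - γ * Fk) / (1 - γ ^ 2) with hbb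
    set w := x - aa • (Pi.single k 1 : B → ℝ) - bb • (Pi.single l 1 : B → ℝ) with hw
    have hsymm : geomC Mat l k = γ := by rw [hγ]; exact (geomC_symm ..).symm
    have hwk : geomPhi Mat k w = 0 := by
      rw [hw, map_sub, map_sub, map_smul, map_smul, geomPhi_single, geomPhi_single,
        geomC_self, hsymm, ← hFk, smul_eq_mul, smul_eq_mul, mul_one, haa, hbb]
      field_simp
      ring
    have hwl : geomPhi Mat l w = 0 := by
      rw [hw, map_sub, map_sub, map_smul, map_smul, geomPhi_single, geomPhi_single,
        geomC_self, ← hγ, ← hFl, smul_eq_mul, smul_eq_mul, mul_one, haa, hbb]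
      field_simp
      ring
    have hx : x = w + (aa • (Pi.single k 1 : B → ℝ) + bb • (Pi.single l 1 : B → ℝ)) := by
      rw [hw]; module
    rw [Module.End.one_apply]
    nth_rewrite 1 [hx]
    rw [map_add, hfix w hwk hwl m, hplane aa bb]
    exact hx.symm

lemma coxeter_sq_ne_one {B : Type*} [Fintype B] (Mat : CoxeterMatrix B)
    {W : Type*} [Group W] (cs : CoxeterSystem Mat W)
    (hsph : ∀ i j, Mat.M i j ≠ 0) {i j : B} (h3 : 3 ≤ Mat.M i j) :
    (cs.simple i * cs.simple j) ^ 2 ≠ 1 := by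
  classical
  intro h
  have hij : i ≠ j := by
    intro hij; rw [hij, Mat.diagonal] at h3; omega
  set Θ : W →* Module.End ℝ (B → ℝ) :=
    cs.lift ⟨fun k => geomSig Mat k, by intro k l; exact geomLiftable Mat hsph k l⟩ with hΘ
  have him : (geomSig Mat i * geomSig Mat j) ^ 2 = 1 := by
    have := congrArg Θ h
    rw [map_pow, map_mul, map_one] at this
    rwa [show Θ (cs.simple i) = geomSig Mat i from cs.lift_apply_simple _ i,
      show Θ (cs.simple j) = geomSig Mat j from cs.lift_apply_simple _ j] at this
  set γ := geomC Mat i j with hγ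
  have e0 : (Pi.single j 1 : B → ℝ) =
      (0:ℝ) • (Pi.single i 1 : B → ℝ) + (1:ℝ) • (Pi.single j 1 : B → ℝ) := by module
  have key : ((geomSig Mat i * geomSig Mat j) ^ 2) (Pi.single j 1 : B → ℝ) =
      ((4 * γ ^ 2 - 1) * (2 * γ * 1) + 2 * γ * (-(2 * γ) * 0 - 1)) • (Pi.single i 1 : B → ℝ) +
        (-(2 * γ) * (2 * γ * 1) - (-(2 * γ) * 0 - 1)) • (Pi.single j 1 : B → ℝ) := by
    rw [sq, Module.End.mul_apply]
    nth_rewrite 1 [e0]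
    rw [geomL1 Mat i j hij, geomL1 Mat i j hij]
    match_scalars <;> ring
  rw [him] at key
  have hco := congrFun key j
  simp only [Module.End.one_apply, Pi.add_apply, Pi.smul_apply, smul_eq_mul,
    Pi.single_apply, if_pos rfl, if_neg (Ne.symm hij), mul_zero, mul_one] at hco
  norm_num at hco
  have hγ0 : γ = 0 := by nlinarith [sq_nonneg γ]
  -- but γ = -cos (π / M i j) with M i j ≥ 3, so cos (π / M i j) > 0
  have hmR : (3:ℝ) ≤ (Mat.M i j : ℝ) := by exact_mod_cast h3
  have hθpos : 0 < Real.pi / (Mat.M i j : ℝ) := div_pos Real.pi_pos (by linarith)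
  have hθlt : Real.pi / (Mat.M i j : ℝ) < Real.pi / 2 := by
    apply div_lt_div_of_pos_left Real.pi_pos (by norm_num)
    linarith
  have hcos : 0 < Real.cos (Real.pi / (Mat.M i j : ℝ)) :=
    Real.cos_pos_of_mem_Ioo ⟨by linarith, hθlt⟩
  rw [hγ, geomC, neg_eq_zero] at hγ0
  rw [hγ0] at hcos
  exact lt_irrefl _ hcos

lemma refl_coeff_ne (B : Type*) [Fintype B] (Mat : CoxeterMatrix B)
    (W : Type*) [Group W] (cs : CoxeterSystem Mat W)
    (K V : Type*) [Field K] [CharZero K] [AddCommGroup V] [Module K V]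
    (R : W →* (V ≃ₗ[K] V)) (a : Module.Basis B K V)
    (hra : ∀ i, R (cs.simple i) (a i) = -(a i))
    (hdir : ∀ i, ∀ x : V, R (cs.simple i) x - x ∈ Submodule.span K ({a i} : Set V))
    (horder : ∀ i j, orderOf (R (cs.simple i) * R (cs.simple j)) =
        orderOf (cs.simple i * cs.simple j))
    (hsph : ∀ i j, Mat.M i j ≠ 0)
    {i j : B} (h3 : 3 ≤ Mat.M i j) :
    R (cs.simple j) (a i) ≠ a i := by
  intro hfix
  have hij : i ≠ j := by
    intro hij; rw [hij, Mat.diagonal] at h3; omega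
  have mulapp : ∀ (f g : V ≃ₗ[K] V) (x : V), (f * g) x = f (g x) := fun _ _ _ => rfl
  obtain ⟨c, hc⟩ := Submodule.mem_span_singleton.mp (hdir i (a j))
  have hsc : R (cs.simple i) (a j) = a j + c • a i := by
    have h := hc.symm
    rw [sub_eq_iff_eq_add] at h
    rw [h]; abel
  set g := R (cs.simple i * cs.simple j) with hg
  have hgmul : g = R (cs.simple i) * R (cs.simple j) := map_mul R _ _
  have hgai : g (a i) = -(a i) := by
    rw [hgmul, mulapp, hfix, hra i]
  have hgaj : g (a j) = -(a j) - c • a i := by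
    rw [hgmul, mulapp, hra j, map_neg, hsc]
    abel
  -- power formula
  have hpow : ∀ n : ℕ, (g ^ n) (a j) =
      ((-1 : K) ^ n * (n * c)) • a i + ((-1 : K) ^ n) • a j := by
    intro n
    induction n with
    | zero => simp
    | succ n ih =>
      have : g ^ (n + 1) = g * g ^ n := by rw [pow_succ']
      rw [this, mulapp, ih, map_add, map_smul, map_smul, hgai, hgaj]
      match_scalars
      · push_cast; ring
      · push_cast; ring
  -- g ^ (M i j) = 1
  set m := Mat.M i j with hm
  have hgm : g ^ m = 1 := by
    rw [hg, ← map_pow, cs.simple_mul_simple_pow i j, map_one]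
  have hmaj := hpow m
  rw [hgm] at hmaj
  have hone : (a j : V) = ((-1 : K) ^ m * (m * c)) • a i + ((-1 : K) ^ m) • a j := hmaj
  have hcoeff : (-1 : K) ^ m * (m * c) = 0 := by
    have := congrArg a.repr hone
    rw [map_add, map_smul, map_smul, Module.Basis.repr_self, Module.Basis.repr_self] at this
    have h2 := DFunLike.congr_fun this i
    simpa [Finsupp.single_apply, hij, Ne.symm hij] using h2.symm
  have hc0 : c = 0 := by
    rcases mul_eq_zero.mp hcoeff with h | h
    · exact absurd h (pow_ne_zero _ (by norm_num))
    · rcases mul_eq_zero.mp h with h' | h'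
      · exact absurd h' (Nat.cast_ne_zero.mpr (by omega))
      · exact h'
  -- now R s_i fixes a j as well, so g² = 1
  have hscj : R (cs.simple i) (a j) = a j := by rw [hsc, hc0, zero_smul, add_zero]
  have hgaj' : g (a j) = -(a j) := by rw [hgaj, hc0, zero_smul, sub_zero]
  have hg2 : g ^ 2 = 1 := by
    apply DFunLike.ext
    intro x
    obtain ⟨d, hd⟩ := Submodule.mem_span_singleton.mp (hdir j x)
    obtain ⟨d', hd'⟩ := Submodule.mem_span_singleton.mp (hdir i x)
    have hsjx : R (cs.simple j) x = x + d • a j := by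
      have h := hd.symm; rw [sub_eq_iff_eq_add] at h; rw [h]; abel
    have hsix : R (cs.simple i) x = x + d' • a i := by
      have h := hd'.symm; rw [sub_eq_iff_eq_add] at h; rw [h]; abel
    have hgx : g x = x + d' • a i + d • a j := by
      rw [hgmul, mulapp, hsjx, map_add, map_smul, hscj, hsix]
    have : (g ^ 2) x = g (g x) := by rw [sq, mulapp]
    rw [this, hgx, map_add, map_add, map_smul, map_smul, hgx, hgai, hgaj']
    show _ = x
    module
  -- transfer to W and contradict
  have hordg : orderOf g ∣ 2 := orderOf_dvd_of_pow_eq_one hg2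
  have : orderOf (cs.simple i * cs.simple j) ∣ 2 := by
    rw [← horder i j]
    rw [hgmul] at hordg
    exact hordg
  have hsq : (cs.simple i * cs.simple j) ^ 2 = 1 := orderOf_dvd_iff_pow_eq_one.mp this
  exact coxeter_sq_ne_one Mat cs hsph h3 hsq

lemma chi_vanish (B : Type*) [Fintype B] (Mat : CoxeterMatrix B)
    (W : Type*) [Group W] (cs : CoxeterSystem Mat W)
    (K V : Type*) [Field K] [CharZero K] [AddCommGroup V] [Module K V]
    (θ : K ≃+* K)
    (R : W →* (V ≃ₗ[K] V)) (a : Module.Basis B K V)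
    (hra : ∀ i, R (cs.simple i) (a i) = -(a i))
    (hdir : ∀ i, ∀ x : V, R (cs.simple i) x - x ∈ Submodule.span K ({a i} : Set V))
    (horder : ∀ i j, orderOf (R (cs.simple i) * R (cs.simple j)) =
        orderOf (cs.simple i * cs.simple j))
    (hsph : ∀ i j, Mat.M i j ≠ 0)
    (hconn : (SimpleGraph.fromRel fun i j => 3 ≤ Mat.M i j).Connected)
    (χ : V → V → K)
    (h1 : ∀ x x' y : V, χ (x + x') y = χ x y + χ x' y)
    (h2 : ∀ x y y' : V, χ x (y + y') = χ x y + χ x y')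
    (h3 : ∀ (c : K) (x y : V), χ (c • x) y = c * χ x y)
    (h4 : ∀ (c : K) (x y : V), χ x (c • y) = θ c * χ x y)
    (h5 : ∀ (w : W) (x y : V), χ (R w x) (R w y) = χ x y)
    (i0 : B) (h0 : χ (a i0) (a i0) = 0) :
    ∀ x y : V, χ x y = 0 := by
  -- coefficients
  have hcf : ∀ (i : B) (y : V), ∃ c : K, R (cs.simple i) y = y + c • a i := by
    intro i y
    obtain ⟨c, hc⟩ := Submodule.mem_span_singleton.mp (hdir i y)
    refine ⟨c, ?_⟩
    have h := hc.symm
    rw [sub_eq_iff_eq_add] at h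
    rw [h]; abel
  choose cf hcfs using hcf
  have two_ne : (2 : K) ≠ 0 := two_ne_zero
  -- second-slot identity
  have key2 : ∀ (i : B) (y : V), 2 * χ (a i) y = -(θ (cf i y) * χ (a i) (a i)) := by
    intro i y
    have h := h5 (cs.simple i) (a i) y
    rw [hra i, hcfs i y] at h
    rw [show -(a i) = (-1 : K) • a i from by module] at h
    rw [h3, h2, h4] at h
    linear_combination -h
  -- first-slot identity
  have key1 : ∀ (i : B) (x : V), 2 * χ x (a i) = -(cf i x * χ (a i) (a i)) := by
    intro i x
    have h := h5 (cs.simple i) x (a i)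
    rw [hra i, hcfs i x] at h
    rw [show -(a i) = (-1 : K) • a i from by module] at h
    rw [h1, h4, h3, h4, map_neg, map_one] at h
    linear_combination -h
  -- propagation along edges
  have prop : ∀ i j : B, 3 ≤ Mat.M i j → χ (a i) (a i) = 0 → χ (a j) (a j) = 0 := by
    intro i j hM hi
    have hij1 : χ (a i) (a j) = 0 := by
      have := key2 i (a j)
      rw [hi, mul_zero, neg_zero] at this
      exact (mul_eq_zero.mp this).resolve_left two_ne
    have h := key1 j (a i)
    rw [hij1, mul_zero] at h
    have := (neg_eq_zero.mp h.symm)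
    rcases mul_eq_zero.mp this with hcz | hz
    · exfalso
      apply refl_coeff_ne B Mat W cs K V R a hra hdir horder hsph hM
      rw [hcfs j (a i), hcz, zero_smul, add_zero]
    · exact hz
  -- connectivity
  have hstep : ∀ u v : B, (SimpleGraph.fromRel fun i j => 3 ≤ Mat.M i j).Adj u v →
      χ (a u) (a u) = 0 → χ (a v) (a v) = 0 := by
    intro u v huv hu
    rw [SimpleGraph.fromRel_adj] at huv
    rcases huv.2 with h | h
    · exact prop u v h hu
    · exact prop u v (by rw [Mat.symmetric u v]; exact h) hu
  have walkprop : ∀ (u v : B)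
      (p : (SimpleGraph.fromRel fun i j => 3 ≤ Mat.M i j).Walk u v),
      χ (a u) (a u) = 0 → χ (a v) (a v) = 0 := by
    intro u v p
    induction p with
    | nil => exact id
    | cons huv p ih => exact fun hu => ih (hstep _ _ huv hu)
  have hall : ∀ i : B, χ (a i) (a i) = 0 := by
    intro i
    obtain ⟨p⟩ := (hconn i0 i)
    exact walkprop i0 i p h0
  -- rows vanish
  have hrow : ∀ (i : B) (y : V), χ (a i) y = 0 := by
    intro i y
    have := key2 i y
    rw [hall i, mul_zero, neg_zero] at this
    exact (mul_eq_zero.mp this).resolve_left two_ne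
  -- conclude
  intro x y
  let f : V →ₗ[K] K :=
    { toFun := fun x => χ x y
      map_add' := fun u v => h1 u v y
      map_smul' := fun c u => h3 c u y }
  have hf : f = 0 := by
    apply a.ext
    intro i
    simpa [f] using hrow i y
  have := DFunLike.congr_fun hf x
  simpa [f] using this

/-- Under the hypotheses of the fundamental construction (reflection representation of an
irreducible 2-spherical Coxeter system of finite rank), the space of `G`-invariant
`θ`-sesquilinear forms on `M` has dimension at most 1. -/
theorem invariant_sesquilinear_forms_dim_le_one
    (B : Type*) [Fintype B] (Mat : CoxeterMatrix B)
    (W : Type*) [Group W] (cs : CoxeterSystem Mat W)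
    (K V : Type*) [Field K] [CharZero K] [AddCommGroup V] [Module K V]
    (θ : K ≃+* K)
    (R : W →* (V ≃ₗ[K] V)) (a : Module.Basis B K V)
    (hra : ∀ i, R (cs.simple i) (a i) = -(a i))
    (hdir : ∀ i, ∀ x : V, R (cs.simple i) x - x ∈ Submodule.span K ({a i} : Set V))
    (horder : ∀ i j, orderOf (R (cs.simple i) * R (cs.simple j)) =
        orderOf (cs.simple i * cs.simple j))
    (hsph : ∀ i j, Mat.M i j ≠ 0)
    (hconn : (SimpleGraph.fromRel fun i j => 3 ≤ Mat.M i j).Connected) :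
    ∀ φ ψ : V → V → K,
      (∀ x x' y : V, φ (x + x') y = φ x y + φ x' y) →
      (∀ x y y' : V, φ x (y + y') = φ x y + φ x y') →
      (∀ (c : K) (x y : V), φ (c • x) y = c * φ x y) →
      (∀ (c : K) (x y : V), φ x (c • y) = θ c * φ x y) →
      (∀ (w : W) (x y : V), φ (R w x) (R w y) = φ x y) →
      (∀ x x' y : V, ψ (x + x') y = ψ x y + ψ x' y) →
      (∀ x y y' : V, ψ x (y + y') = ψ x y + ψ x y') →
      (∀ (c : K) (x y : V), ψ (c • x) y = c * ψ x y) →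
      (∀ (c : K) (x y : V), ψ x (c • y) = θ c * ψ x y) →
      (∀ (w : W) (x y : V), ψ (R w x) (R w y) = ψ x y) →
      ∃ c d : K, ¬(c = 0 ∧ d = 0) ∧ ∀ x y : V, c * φ x y = d * ψ x y := by
  intro φ ψ hφ1 hφ2 hφ3 hφ4 hφ5 hψ1 hψ2 hψ3 hψ4 hψ5
  obtain ⟨i0⟩ : Nonempty B := hconn.nonempty
  by_cases hz : φ (a i0) (a i0) = 0 ∧ ψ (a i0) (a i0) = 0
  · refine ⟨1, 0, by simp, fun x y => ?_⟩
    have := chi_vanish B Mat W cs K V θ R a hra hdir horder hsph hconn φ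
      hφ1 hφ2 hφ3 hφ4 hφ5 i0 hz.1 x y
    rw [this]; ring
  · set c := ψ (a i0) (a i0) with hc
    set d := φ (a i0) (a i0) with hd
    refine ⟨c, d, by tauto, fun x y => ?_⟩
    set χ : V → V → K := fun x y => c * φ x y - d * ψ x y with hχ
    have hv := chi_vanish B Mat W cs K V θ R a hra hdir horder hsph hconn χ
      (fun x x' y => by simp only [hχ, hφ1, hψ1]; ring)
      (fun x y y' => by simp only [hχ, hφ2, hψ2]; ring)
      (fun r x y => by simp only [hχ, hφ3, hψ3]; ring)
      (fun r x y => by simp only [hχ, hφ4, hψ4]; ring)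
      (fun w x y => by simp only [hχ, hφ5, hψ5])
      i0 (by simp only [hχ, ← hc, ← hd]; ring)
      x y
    have h := sub_eq_zero.mp hv
    exact h
end

section
/- Suppose there exists a nonzero G-invariant bilinear form φ on M, with G arising from the fundamental construction with Cartan matrix Car(G). Setting φ(aᵢ, aᵢ) = 2γᵢ (with the normalization γ₁ = 1), the Gram matrix of φ in the basis (a₁, …, aₙ) equals diag(1, γ₂, …, γₙ) · Car(G). -/
/-- If there is a nonzero `G`-invariant bilinear form `φ` on `M`, with `G` arising from the
fundamental construction with Cartan matrix `Car(G) = (c_{ij})` (so `sᵢ(aⱼ) = aⱼ - c_{ij}aᵢ`,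
`c_{ii} = 2`), then, writing `φ(aᵢ,aᵢ) = 2γᵢ` with the normalization `γ_{i₀} = 1`, the Gram
matrix of `φ` in the basis `(aᵢ)` equals `diag(γ) · Car(G)`. -/
theorem gram_matrix_eq_diagonal_mul_cartan
    (K V : Type*) [Field K] [CharZero K] [AddCommGroup V] [Module K V]
    (ι : Type*) [Fintype ι] [DecidableEq ι]
    (a : Module.Basis ι K V) (g : ι → Module.End K V) (c : ι → ι → K)
    (hg2 : ∀ i, g i * g i = 1)
    (hact : ∀ i j, g i (a j) = a j - c i j • a i)
    (hcii : ∀ i, c i i = 2)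
    (φ : LinearMap.BilinForm K V) (hφ : φ ≠ 0)
    (hinv : ∀ i, ∀ x y : V, φ (g i x) (g i y) = φ x y)
    (γ : ι → K) (hγ : ∀ i, φ (a i) (a i) = 2 * γ i)
    (i₀ : ι) (hnorm : γ i₀ = 1) :
    Matrix.of (fun i j => φ (a i) (a j)) = Matrix.diagonal γ * Matrix.of c := by
  ext i j
  have key := hinv i (a i) (a j)
  rw [hact i i, hact i j, hcii i] at key
  simp only [map_sub, map_smul, LinearMap.sub_apply, LinearMap.smul_apply,
    smul_eq_mul] at key
  simp only [Matrix.diagonal_mul, Matrix.of_apply]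
  linear_combination (c i j * hγ i - key) / 2
end
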